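/- Let F be a finite field of characteristic 2, and define σ : F → F by σ(x) = x⁻¹ for x ≠ 0 and σ(0) = 0. Then the graph {(x, σ(x)) : x ∈ F} ⊆ F² contains no three distinct collinear points. -/

import Mathlib

open Classical in

/-- Over a finite field of characteristic 2, the graph of the inversion permutation
(x ↦ x⁻¹, 0 ↦ 0) contains no three distinct collinear points. -/
theorem inversion_no_collinear_triple {F : Type*} [Field F] [Fintype F]
    (hchar : ringChar F = 2)
    (σ : F → F) (hσ : ∀ x : F, σ x = if x = 0 then 0 else x⁻¹) :
    ∀ x₁ x₂ x₃ : F, x₁ ≠ x₂ → x₁ ≠ x₃ → x₂ ≠ x₃ →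
      x₁ * (σ x₂ - σ x₃) + x₂ * (σ x₃ - σ x₁) + x₃ * (σ x₁ - σ x₂) ≠ 0 := by
  have h2 : (2 : F) = 0 := by
    haveI : CharP F 2 := by rw [← hchar]; exact ringChar.charP F
    exact CharP.cast_eq_zero F 2
  intro x₁ x₂ x₃ h12 h13 h23 h
  rw [hσ x₁, hσ x₂, hσ x₃] at h
  by_cases hx1 : x₁ = 0
  · have hx2 : x₂ ≠ 0 := fun hh => h12 (hx1.trans hh.symm)
    have hx3 : x₃ ≠ 0 := fun hh => h13 (hx1.trans hh.symm)
    simp only [hx1, ↓reduceIte, if_neg hx2, if_neg hx3] at h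
    field_simp at h
    have key : (x₂ - x₃) * (x₂ - x₃) = 0 := by
      linear_combination h + (x₃ * x₃ - x₂ * x₃) * h2
    exact h23 (sub_eq_zero.mp (mul_self_eq_zero.mp key))
  · by_cases hx2 : x₂ = 0
    · have hx3 : x₃ ≠ 0 := fun hh => h23 (hx2.trans hh.symm)
      simp only [hx2, ↓reduceIte, if_neg hx1, if_neg hx3] at h
      field_simp at h
      have key : (x₁ - x₃) * (x₁ - x₃) = 0 := by
        linear_combination -h + (x₃ * x₃ - x₁ * x₃) * h2
      exact h13 (sub_eq_zero.mp (mul_self_eq_zero.mp key))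
    · by_cases hx3 : x₃ = 0
      · simp only [hx3, ↓reduceIte, if_neg hx1, if_neg hx2] at h
        field_simp at h
        have key : (x₁ - x₂) * (x₁ - x₂) = 0 := by
          linear_combination h + (x₂ * x₂ - x₁ * x₂) * h2
        exact h12 (sub_eq_zero.mp (mul_self_eq_zero.mp key))
      · simp only [if_neg hx1, if_neg hx2, if_neg hx3] at h
        field_simp at h
        have key : x₁ * x₂ * x₃ * ((x₁ - x₂) * ((x₂ - x₃) * (x₃ - x₁))) = 0 := by
          linear_combination x₁ * x₂ * x₃ * h
        rcases mul_eq_zero.mp key with hk | hk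
        · rcases mul_eq_zero.mp hk with hk' | hk'
          · exact hx2 ((mul_eq_zero.mp hk').resolve_left hx1)
          · exact hx3 hk'
        · rcases mul_eq_zero.mp hk with hk' | hk'
          · exact h12 (sub_eq_zero.mp hk')
          · rcases mul_eq_zero.mp hk' with hk'' | hk''
            · exact h23 (sub_eq_zero.mp hk'')
            · exact h13 (sub_eq_zero.mp hk'').symm
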